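/- Fix integers n ≥ 1 and d ≥ 2. Define polynomials in n variables by f_1 = x_1^d and f_i = x_{i-1} − x_i^d for i = 2, …, n, and set F := f_1^2 + f_2^2 + ⋯ + f_n^2, a real polynomial of degree 2d. Then F(x) > 0 for every x ∈ ℝ^n with x ≠ 0 (so F has an isolated real zero at the origin), and for every real M < 2·d^n and all constants C > 0 and ε > 0, there exists x ∈ ℝ^n with 0 < ‖x‖ < ε and F(x) < C·‖x‖^M; that is, the Łojasiewicz exponent of F at the origin is at least 2·d^n. -/

import Mathlib

/-- **The sum-of-squares worst-case example.**
For `n ≥ 1`, `d ≥ 2` let `f 1 = x₁^d`, `f i = x_{i-1} - x_i^d` for `2 ≤ i ≤ n` (indexed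
here by `Fin n`), and `F = Σ_i (f i)^2`, a polynomial of degree `2d`.  Then `F x > 0` for
every `x ≠ 0`, and for every real `M < 2 d^n` and all `C, ε > 0` there is `x` with
`0 < ‖x‖ < ε` and `F x < C * ‖x‖ ^ M`; i.e. the Łojasiewicz exponent of `F` at the origin
is at least `2 d^n`. -/
theorem worst_example_sum_of_squares
    (n d : ℕ) (hn : 1 ≤ n) (hd : 2 ≤ d)
    (f : Fin n → MvPolynomial (Fin n) ℝ)
    (hf : ∀ i : Fin n, f i = if _ : (i : ℕ) = 0 then MvPolynomial.X i ^ d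
      else MvPolynomial.X (⟨(i : ℕ) - 1, lt_of_le_of_lt (Nat.sub_le _ _) i.isLt⟩ : Fin n)
        - MvPolynomial.X i ^ d)
    (F : MvPolynomial (Fin n) ℝ) (hF : F = ∑ i : Fin n, f i ^ 2) :
    F.totalDegree = 2 * d ∧
    (∀ x : EuclideanSpace ℝ (Fin n), x ≠ 0 →
      0 < MvPolynomial.eval (fun j => x j) F) ∧
    (∀ M : ℝ, M < 2 * (d : ℝ) ^ n → ∀ C > (0 : ℝ), ∀ ε > (0 : ℝ),
      ∃ x : EuclideanSpace ℝ (Fin n), 0 < ‖x‖ ∧ ‖x‖ < ε ∧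
        MvPolynomial.eval (fun j => x j) F < C * ‖x‖ ^ M) := by
  subst hF
  have hd0 : 0 < d := by omega
  set L : Fin n := ⟨n - 1, by omega⟩ with hL
  refine ⟨?_, ?_, ?_⟩
  · -- total degree
    apply le_antisymm
    · refine (MvPolynomial.totalDegree_finset_sum _ _).trans ?_
      apply Finset.sup_le
      intro i _
      refine (MvPolynomial.totalDegree_pow _ 2).trans ?_
      have hti : (f i).totalDegree ≤ d := by
        rw [hf i]
        split
        · simp [MvPolynomial.totalDegree_X_pow]
        · refine (MvPolynomial.totalDegree_sub _ _).trans ?_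
          simp only [MvPolynomial.totalDegree_X_pow, MvPolynomial.totalDegree_X]
          omega
      omega
    · -- lower bound via coefficient of X_L^(2d)
      set m : Fin n →₀ ℕ := Finsupp.single L (2 * d) with hm
      have hcoeff : MvPolynomial.coeff m (∑ i : Fin n, f i ^ 2) = 1 := by
        rw [MvPolynomial.coeff_sum]
        rw [Finset.sum_eq_single L]
        · -- coeff of f L ^ 2
          rw [hf L]
          split
          · rename_i h0
            rw [← pow_mul, MvPolynomial.coeff_X_pow]
            rw [if_pos]
            congr 1
            omega
          · rename_i h0
            rw [sub_sq, ← pow_mul]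
            set K : Fin n := ⟨(L : ℕ) - 1, lt_of_le_of_lt (Nat.sub_le _ _) L.isLt⟩ with hK
            have hKL : K ≠ L := by
              intro h
              have := congrArg Fin.val h
              simp only [hK] at this
              omega
            have h1 : MvPolynomial.coeff m ((MvPolynomial.X K : MvPolynomial (Fin n) ℝ) ^ 2) = 0 := by
              rw [MvPolynomial.coeff_X_pow, if_neg]
              intro h
              rw [hm] at h
              have h' := DFunLike.congr_fun h L
              rw [Finsupp.single_eq_of_ne' hKL, Finsupp.single_eq_same] at h'
              omega
            have h2 : MvPolynomial.coeff m (2 * (MvPolynomial.X K * (MvPolynomial.X L : MvPolynomial (Fin n) ℝ) ^ d)) = 0 := by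
              have : (MvPolynomial.X K * (MvPolynomial.X L : MvPolynomial (Fin n) ℝ) ^ d)
                  = MvPolynomial.monomial (Finsupp.single K 1 + Finsupp.single L d) 1 := by
                rw [MvPolynomial.X_pow_eq_monomial, MvPolynomial.X, MvPolynomial.monomial_mul, one_mul]
              rw [this]
              have h2' : (2 : MvPolynomial (Fin n) ℝ) = MvPolynomial.C 2 := by
                exact (map_ofNat MvPolynomial.C 2).symm
              rw [h2', MvPolynomial.coeff_C_mul, MvPolynomial.coeff_monomial, if_neg]
              · ring
              · intro h
                rw [hm] at h
                have h' := DFunLike.congr_fun h K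
                rw [Finsupp.add_apply, Finsupp.single_eq_same, Finsupp.single_eq_of_ne' (Ne.symm hKL), Finsupp.single_eq_of_ne' (Ne.symm hKL)] at h'
                omega
            have h3 : MvPolynomial.coeff m ((MvPolynomial.X L : MvPolynomial (Fin n) ℝ) ^ (d * 2)) = 1 := by
              rw [MvPolynomial.coeff_X_pow, if_pos]
              congr 1
              omega
            have hassoc : (2 : MvPolynomial (Fin n) ℝ) * MvPolynomial.X K * MvPolynomial.X L ^ d
                = 2 * (MvPolynomial.X K * MvPolynomial.X L ^ d) := by ring
            rw [hassoc, MvPolynomial.coeff_add, MvPolynomial.coeff_sub, h1, h2, h3]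
            ring
        · -- other indices contribute 0
          intro i _ hiL
          have hdeg : MvPolynomial.degreeOf L (f i ^ 2) = 0 := by
            have hfi : MvPolynomial.degreeOf L (f i) = 0 := by
              rw [hf i]
              split
              · rename_i h0
                have hiL' : L ≠ i := fun h => hiL h.symm
                refine Nat.eq_zero_of_le_zero ?_
                refine (MvPolynomial.degreeOf_pow_le _ _ _).trans ?_
                rw [MvPolynomial.degreeOf_X, if_neg hiL']
                simp
              · rename_i h0
                refine Nat.eq_zero_of_le_zero ?_
                refine (MvPolynomial.degreeOf_sub_le _ _ _).trans ?_
                have e1 : MvPolynomial.degreeOf L (MvPolynomial.X (⟨(i : ℕ) - 1, lt_of_le_of_lt (Nat.sub_le _ _) i.isLt⟩ : Fin n) : MvPolynomial (Fin n) ℝ) = 0 := by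
                  rw [MvPolynomial.degreeOf_X, if_neg]
                  intro h
                  have := congrArg Fin.val h
                  simp only [hL] at this
                  have hi : (i : ℕ) < n := i.isLt
                  have hiLne : (i : ℕ) ≠ n - 1 := by
                    intro h'
                    exact hiL (Fin.ext (by simp [hL, h']))
                  omega
                have e2 : MvPolynomial.degreeOf L ((MvPolynomial.X i : MvPolynomial (Fin n) ℝ) ^ d) = 0 := by
                  refine Nat.eq_zero_of_le_zero ?_
                  refine (MvPolynomial.degreeOf_pow_le _ _ _).trans ?_
                  rw [MvPolynomial.degreeOf_X, if_neg (fun h => hiL h.symm)]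
                  simp
                omega
            refine Nat.eq_zero_of_le_zero ?_
            refine (MvPolynomial.degreeOf_pow_le _ _ _).trans ?_
            omega
          by_contra hne
          have hmem : m ∈ (f i ^ 2).support := MvPolynomial.mem_support_iff.mpr hne
          have := MvPolynomial.monomial_le_degreeOf L hmem
          rw [hdeg] at this
          simp [hm, Finsupp.single_apply] at this
          omega
        · intro h
          exact absurd (Finset.mem_univ L) h
      have hmem : m ∈ (∑ i : Fin n, f i ^ 2).support := by
        rw [MvPolynomial.mem_support_iff, hcoeff]
        norm_num
      have := MvPolynomial.le_totalDegree hmem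
      have hsum : m.sum (fun _ e => e) = 2 * d := by
        rw [hm, Finsupp.sum_single_index]
        rfl
      omega
  · -- positivity
    intro x hx
    have hFx : MvPolynomial.eval (fun j => x j) (∑ i : Fin n, f i ^ 2)
        = ∑ i : Fin n, (MvPolynomial.eval (fun j => x j) (f i)) ^ 2 := by
      simp [map_sum]
    rw [hFx]
    have hnn : ∀ i ∈ Finset.univ, (0:ℝ) ≤ (MvPolynomial.eval (fun j => x j) (f i)) ^ 2 :=
      fun i _ => sq_nonneg _
    rcases (Finset.sum_nonneg hnn).lt_or_eq with h | h
    · exact h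
    · exfalso
      have hzero : ∀ i : Fin n, MvPolynomial.eval (fun j => x j) (f i) = 0 := by
        intro i
        have := (Finset.sum_eq_zero_iff_of_nonneg hnn).mp h.symm i (Finset.mem_univ i)
        exact pow_eq_zero_iff (two_ne_zero) |>.mp this
      have hxk : ∀ k : ℕ, ∀ hk : k < n, x ⟨k, hk⟩ = 0 := by
        intro k
        induction k with
        | zero =>
          intro hk
          have := hzero ⟨0, hk⟩
          rw [hf ⟨0, hk⟩] at this
          rw [dif_pos rfl] at this
          simp only [map_pow, MvPolynomial.eval_X] at this
          exact pow_eq_zero_iff hd0.ne' |>.mp this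
        | succ k ih =>
          intro hk
          have hk' : k < n := by omega
          have := hzero ⟨k + 1, hk⟩
          rw [hf ⟨k + 1, hk⟩] at this
          rw [dif_neg (by simp)] at this
          simp only [map_sub, map_pow, MvPolynomial.eval_X] at this
          have hxk' : x ⟨k + 1 - 1, lt_of_le_of_lt (Nat.sub_le _ _) hk⟩ = 0 := by
            have : (⟨k + 1 - 1, lt_of_le_of_lt (Nat.sub_le _ _) hk⟩ : Fin n) = ⟨k, hk'⟩ := by
              ext; simp
            rw [this]
            exact ih hk'
          rw [hxk', zero_sub, neg_eq_zero] at this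
          exact pow_eq_zero_iff hd0.ne' |>.mp this
      apply hx
      ext j
      simpa using hxk j j.isLt
  · -- Łojasiewicz
    intro M hM C hC ε hε
    set M' : ℝ := max M 0 with hM'def
    have hM'0 : 0 ≤ M' := le_max_right _ _
    have hM'lt : M' < 2 * (d:ℝ) ^ n := max_lt hM (by positivity)
    set a : ℝ := 2 * (d:ℝ) ^ n - M' with ha_def
    have ha : 0 < a := by rw [ha_def]; linarith
    set b : ℝ := min (1/2) (C/2) with hb_def
    have hb0 : 0 < b := lt_min (by norm_num) (by linarith)
    have hb1 : b < 1 := lt_of_le_of_lt (min_le_left _ _) (by norm_num)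
    have hbC : b < C := lt_of_le_of_lt (min_le_right _ _) (by linarith)
    set δ : ℝ := b ^ (1/a : ℝ) with hdel_def
    have hδ0 : 0 < δ := Real.rpow_pos_of_pos hb0 _
    have hδ1 : δ < 1 := Real.rpow_lt_one hb0.le hb1 (by positivity)
    have hδa : δ ^ (a : ℝ) = b := by
      rw [hdel_def, ← Real.rpow_mul hb0.le, one_div, inv_mul_cancel₀ ha.ne', Real.rpow_one]
    set s : ℝ := Real.sqrt n + 1 with hs_def
    have hs0 : 0 < s := by positivity
    have hsn : Real.sqrt n < s := by rw [hs_def]; linarith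
    set t : ℝ := min δ (min (1/(2*s)) (ε/(2*s))) with ht_def
    have ht0 : 0 < t := lt_min hδ0 (lt_min (by positivity) (by positivity))
    have htδ : t ≤ δ := min_le_left _ _
    have ht1 : t < 1 := lt_of_le_of_lt htδ hδ1
    set x : EuclideanSpace ℝ (Fin n) := WithLp.toLp 2 (fun j : Fin n => t ^ (d ^ (n - 1 - (j:ℕ)))) with hx_def
    have hxj : ∀ j : Fin n, x j = t ^ (d ^ (n - 1 - (j:ℕ))) := fun j => rfl
    have hev : ∀ i : Fin n, MvPolynomial.eval (fun j => x j) (f i)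
        = if (i:ℕ) = 0 then t ^ (d ^ n) else 0 := by
      intro i
      rw [hf i]
      by_cases h0 : (i:ℕ) = 0
      · rw [dif_pos h0, if_pos h0]
        simp only [map_pow, MvPolynomial.eval_X]
        rw [hxj, ← pow_mul]
        congr 1
        rw [h0, ← pow_succ]
        congr 1
        omega
      · rw [dif_neg h0, if_neg h0]
        simp only [map_sub, map_pow, MvPolynomial.eval_X]
        rw [hxj, hxj, ← pow_mul]
        have he : d ^ (n - 1 - ((i:ℕ) - 1)) = d ^ (n - 1 - (i:ℕ)) * d := by
          rw [← pow_succ]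
          congr 1
          have := i.isLt
          omega
        rw [he, sub_self]
    have hFx : MvPolynomial.eval (fun j => x j) (∑ i : Fin n, f i ^ 2) = t ^ (2 * d ^ n) := by
      rw [map_sum]
      have hterm : ∀ i : Fin n, MvPolynomial.eval (fun j => x j) (f i ^ 2)
          = if (i:ℕ) = 0 then t ^ (2 * d ^ n) else 0 := by
        intro i
        rw [map_pow, hev i]
        by_cases h0 : (i:ℕ) = 0
        · rw [if_pos h0, if_pos h0, ← pow_mul]
          congr 1
          ring
        · rw [if_neg h0, if_neg h0]
          ring
      rw [Finset.sum_congr rfl (fun i _ => hterm i), Finset.sum_eq_single (⟨0, by omega⟩ : Fin n)]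
      · rw [if_pos rfl]
      · intro i _ hi
        rw [if_neg]
        intro h
        exact hi (Fin.ext h)
      · intro h
        exact absurd (Finset.mem_univ _) h
    have hxj_pos : ∀ j : Fin n, 0 < x j := fun j => pow_pos ht0 _
    have hxj_le : ∀ j : Fin n, x j ≤ t := by
      intro j
      rw [hxj]
      calc t ^ (d ^ (n - 1 - (j:ℕ))) ≤ t ^ 1 :=
            pow_le_pow_of_le_one ht0.le ht1.le (Nat.one_le_pow _ _ (by omega))
        _ = t := pow_one t
    have hxL : x (⟨n - 1, by omega⟩ : Fin n) = t := by
      rw [hxj]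
      rw [show n - 1 - ((⟨n - 1, by omega⟩ : Fin n) : ℕ) = 0 by simp, pow_zero, pow_one]
    have htn : t ≤ ‖x‖ := by
      rw [EuclideanSpace.norm_eq]
      rw [show t = Real.sqrt (t ^ 2) from (Real.sqrt_sq ht0.le).symm]
      apply Real.sqrt_le_sqrt
      have h1 : ‖x (⟨n - 1, by omega⟩ : Fin n)‖ ^ 2 = t ^ 2 := by
        rw [hxL, Real.norm_eq_abs, abs_of_pos ht0]
      calc t ^ 2 = ‖x (⟨n - 1, by omega⟩ : Fin n)‖ ^ 2 := h1.symm
        _ ≤ ∑ j : Fin n, ‖x j‖ ^ 2 :=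
            Finset.single_le_sum (f := fun j : Fin n => ‖x j‖ ^ 2)
              (fun j _ => sq_nonneg _) (Finset.mem_univ _)
    have hup : ‖x‖ ≤ Real.sqrt n * t := by
      rw [EuclideanSpace.norm_eq]
      have hsumle : ∑ j : Fin n, ‖x j‖ ^ 2 ≤ (n : ℝ) * t ^ 2 := by
        calc ∑ j : Fin n, ‖x j‖ ^ 2 ≤ ∑ _j : Fin n, t ^ 2 := by
              apply Finset.sum_le_sum
              intro j _
              rw [Real.norm_eq_abs, abs_of_pos (hxj_pos j)]
              exact pow_le_pow_left₀ (hxj_pos j).le (hxj_le j) 2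
          _ = (n : ℝ) * t ^ 2 := by
              rw [Finset.sum_const, Finset.card_univ, Fintype.card_fin, nsmul_eq_mul]
      calc Real.sqrt (∑ j : Fin n, ‖x j‖ ^ 2) ≤ Real.sqrt ((n : ℝ) * t ^ 2) :=
            Real.sqrt_le_sqrt hsumle
        _ = Real.sqrt n * t := by
            rw [Real.sqrt_mul (by positivity), Real.sqrt_sq ht0.le]
    have htB : t ≤ ε / (2 * s) := le_trans (min_le_right _ _) (min_le_right _ _)
    have htA : t ≤ 1 / (2 * s) := le_trans (min_le_right _ _) (min_le_left _ _)
    have hxε : Real.sqrt n * t < ε := by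
      calc Real.sqrt n * t ≤ s * t := mul_le_mul_of_nonneg_right hsn.le ht0.le
        _ ≤ s * (ε / (2 * s)) := mul_le_mul_of_nonneg_left htB hs0.le
        _ = ε / 2 := by field_simp
        _ < ε := by linarith
    have hx1 : ‖x‖ ≤ 1 := by
      refine hup.trans ?_
      calc Real.sqrt n * t ≤ s * t := mul_le_mul_of_nonneg_right hsn.le ht0.le
        _ ≤ s * (1 / (2 * s)) := mul_le_mul_of_nonneg_left htA hs0.le
        _ = 1 / 2 := by field_simp
        _ ≤ 1 := by norm_num
    have hnorm0 : 0 < ‖x‖ := lt_of_lt_of_le ht0 htn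
    refine ⟨x, hnorm0, lt_of_le_of_lt hup hxε, ?_⟩
    rw [hFx]
    have hcast : t ^ (2 * d ^ n : ℕ) = t ^ ((2 * (d:ℝ) ^ n) : ℝ) := by
      rw [← Real.rpow_natCast t (2 * d ^ n)]
      congr 1
      push_cast
      ring
    rw [hcast]
    have hsplit : (2 * (d:ℝ) ^ n) = M' + a := by rw [ha_def]; ring
    rw [hsplit, Real.rpow_add ht0]
    have h1 : t ^ (a : ℝ) ≤ δ ^ (a : ℝ) := Real.rpow_le_rpow ht0.le htδ ha.le
    have h2 : t ^ (a : ℝ) < C := lt_of_le_of_lt (h1.trans_eq hδa) hbC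
    have h3 : t ^ (M' : ℝ) ≤ ‖x‖ ^ (M' : ℝ) := Real.rpow_le_rpow ht0.le htn hM'0
    have h4 : ‖x‖ ^ (M' : ℝ) ≤ ‖x‖ ^ M :=
      Real.rpow_le_rpow_of_exponent_ge hnorm0 hx1 (le_max_left M 0)
    calc t ^ (M' : ℝ) * t ^ (a : ℝ) < t ^ (M' : ℝ) * C :=
          mul_lt_mul_of_pos_left h2 (Real.rpow_pos_of_pos ht0 _)
      _ = C * t ^ (M' : ℝ) := by ring
      _ ≤ C * ‖x‖ ^ (M' : ℝ) := mul_le_mul_of_nonneg_left h3 hC.le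
      _ ≤ C * ‖x‖ ^ M := mul_le_mul_of_nonneg_left h4 hC.le
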